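/- arXiv:1904.10077 — 4 statements merged into one kernel-verified Lean document; each statement's English description precedes it below -/
import Mathlib

section
/- Let 0 ≤ ε12 ≤ ε1 < 1 and 0 ≤ ε12 ≤ ε2 < 1, and let α1, α2 ≥ 0 with α1 + α2 = 1. Suppose x, y > 0 satisfy the two capacity constraints of the two-user broadcast packet erasure channel with feedback: x/(1−ε1) + y/(1−ε12) ≤ 1 and x/(1−ε12) + y/(1−ε2) ≤ 1. Then (1/4)·(α1/x + α2/y) + 1/4 ≥ (1/4)·( (√(α1·(2−ε12−ε2)) + √(α2·(2−ε12−ε1)))² / ((1−ε12)·(2−ε1−ε2)) + 1 ). (This is the deterministic core of the lower bound on the expected weighted sum age of information achievable by any communication policy, where x and y are the long-run per-slot delivery rates to users 1 and 2.) -/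
/-- Lower bound on the expected weighted sum age of information
(deterministic core): for any delivery rates (x, y) in the capacity region
of the two-user broadcast packet erasure channel with feedback. -/
theorem lower_bound_EWSAoI
    (ε1 ε2 ε12 α1 α2 x y : ℝ)
    (h12 : 0 ≤ ε12) (h121 : ε12 ≤ ε1) (h1 : ε1 < 1)
    (h122 : ε12 ≤ ε2) (h2 : ε2 < 1)
    (hα1 : 0 ≤ α1) (hα2 : 0 ≤ α2) (hα : α1 + α2 = 1)
    (hx : 0 < x) (hy : 0 < y)
    (hcap1 : x / (1 - ε1) + y / (1 - ε12) ≤ 1)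
    (hcap2 : x / (1 - ε12) + y / (1 - ε2) ≤ 1) :
    (1/4) * (α1 / x + α2 / y) + 1/4 ≥
      (1/4) * ((Real.sqrt (α1 * (2 - ε12 - ε2)) + Real.sqrt (α2 * (2 - ε12 - ε1)))^2
        / ((1 - ε12) * (2 - ε1 - ε2)) + 1) := by
  have h12lt : ε12 < 1 := lt_of_le_of_lt h121 h1
  have hp1 : (0:ℝ) < 1 - ε1 := by linarith
  have hp2 : (0:ℝ) < 1 - ε2 := by linarith
  have hp12 : (0:ℝ) < 1 - ε12 := by linarith
  set A : ℝ := 2 - ε12 - ε2 with hAdef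
  set B : ℝ := 2 - ε12 - ε1 with hBdef
  have hA : (0:ℝ) < A := by rw [hAdef]; linarith
  have hB : (0:ℝ) < B := by rw [hBdef]; linarith
  have hS : (0:ℝ) < 2 - ε1 - ε2 := by linarith
  have hDS : (0:ℝ) < (1 - ε12) * (2 - ε1 - ε2) := mul_pos hp12 hS
  set a : ℝ := Real.sqrt (α1 * A) with hadef
  set b : ℝ := Real.sqrt (α2 * B) with hbdef
  have ha2 : a ^ 2 = α1 * A := Real.sq_sqrt (by positivity)
  have hb2 : b ^ 2 = α2 * B := Real.sq_sqrt (by positivity)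
  have ha0 : 0 ≤ a := Real.sqrt_nonneg _
  have hb0 : 0 ≤ b := Real.sqrt_nonneg _
  have huv : Real.sqrt (α1 * B) * Real.sqrt (α2 * A) = a * b := by
    rw [hadef, hbdef, ← Real.sqrt_mul (by positivity), ← Real.sqrt_mul (by positivity)]
    ring_nf
  have key2 : 2 * (a * b * (x * y)) ≤ α1 * B * y ^ 2 + α2 * A * x ^ 2 := by
    have h := two_mul_le_add_sq (Real.sqrt (α1 * B) * y) (Real.sqrt (α2 * A) * x)
    have e1 : (Real.sqrt (α1 * B) * y) ^ 2 = α1 * B * y ^ 2 := by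
      rw [mul_pow, Real.sq_sqrt (by positivity)]
    have e2 : (Real.sqrt (α2 * A) * x) ^ 2 = α2 * A * x ^ 2 := by
      rw [mul_pow, Real.sq_sqrt (by positivity)]
    calc 2 * (a * b * (x * y))
        = 2 * (Real.sqrt (α1 * B) * y) * (Real.sqrt (α2 * A) * x) := by rw [← huv]; ring
      _ ≤ (Real.sqrt (α1 * B) * y) ^ 2 + (Real.sqrt (α2 * A) * x) ^ 2 := h
      _ = α1 * B * y ^ 2 + α2 * A * x ^ 2 := by rw [e1, e2]
  clear_value a b
  clear hadef hbdef huv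
  -- clear denominators in the capacity constraints
  rw [div_add_div _ _ hp1.ne' hp12.ne', div_le_one (by positivity)] at hcap1
  rw [div_add_div _ _ hp12.ne' hp2.ne', div_le_one (by positivity)] at hcap2
  have key1 : A * x + B * y ≤ (1 - ε12) * (2 - ε1 - ε2) := by
    rw [hAdef, hBdef]; nlinarith [hcap1, hcap2]
  clear_value A B
  -- main Cauchy–Schwarz inequality
  have main : (a + b) ^ 2 * (x * y) ≤ (α1 * y + α2 * x) * (A * x + B * y) := by
    nlinarith [key2, ha2, hb2, mul_pos hx hy]
  have hsum : α1 / x + α2 / y = (α1 * y + α2 * x) / (x * y) := by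
    rw [div_add_div _ _ hx.ne' hy.ne']; ring_nf
  have h4 : (a + b) ^ 2 ≤ (α1 / x + α2 / y) * (A * x + B * y) := by
    rw [hsum, div_mul_eq_mul_div, le_div_iff₀ (by positivity)]
    exact main
  have hs0 : 0 ≤ α1 / x + α2 / y := by positivity
  have h3 : (α1 / x + α2 / y) * (A * x + B * y) ≤
      (α1 / x + α2 / y) * ((1 - ε12) * (2 - ε1 - ε2)) :=
    mul_le_mul_of_nonneg_left key1 hs0
  have hfin : (a + b) ^ 2 / ((1 - ε12) * (2 - ε1 - ε2)) ≤ α1 / x + α2 / y := by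
    rw [div_le_iff₀ hDS]
    linarith
  rw [ge_iff_le]
  linarith
end

section
/- Let μ1, μ2, μ3 > 0 with μ1 + μ2 + μ3 = 1 and 0 ≤ ε12 < ε1 < 1, and set x = μ1·ε12 + μ2 + μ3, y = μ1·ε1 + μ2 + μ3·ε1, z = μ1·ε12 + μ2 + μ3·ε1, D = μ3·(1−ε1) − μ1·(ε1−ε12), δ = μ1·(1−ε12) + μ1²·(ε1−ε12)·(1−ε12)/D, β = −μ1·(ε1−ε12)·(1−ε1)·(μ1+μ3)/D, and assume D ≠ 0. Then for every integer ℓ ≥ 1 the following identity holds: x^{ℓ−1}·μ1·(1−ε1) + (Σ_{t=1}^{ℓ−1} x^{t−1}·y^{ℓ−1−t})·μ1·(ε1−ε12)·μ1·(1−ε1) + Σ_{d=2}^{ℓ} Σ_{t=1}^{ℓ−d} x^{t−1}·y^{ℓ−d−t}·(μ1·(ε1−ε12))²·z^{d−2}·μ3·(1−ε1) + Σ_{d=2}^{ℓ} x^{ℓ−d}·μ1·(ε1−ε12)·z^{d−2}·μ3·(1−ε1) = δ·x^{ℓ−1} + β·y^{ℓ−1}. (This gives the probability distribution P(I1 = ℓ)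 = δ·x^{ℓ−1} + β·y^{ℓ−1} of the inter-delivery time I1 of user 1 under the stationary randomized policy.) -/
open Finset

/-- Geometric-type sum in closed form. -/
lemma geom_div_aux (a b c : ℝ) (h : a - b = c) (hc : c ≠ 0) (m : ℕ) :
    ∑ i ∈ range m, a ^ i * b ^ (m - 1 - i) = (a ^ m - b ^ m) / c := by
  rw [eq_div_iff hc, ← h, geom_sum₂_mul]

/-- Closed form for the Icc-indexed geometric sum. -/
lemma icc_geom_aux (a b c : ℝ) (h : a - b = c) (hc : c ≠ 0) (m : ℕ) :
    ∑ t ∈ Icc 1 m, a ^ (t - 1) * b ^ (m - t) = (a ^ m - b ^ m) / c := by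
  rw [← geom_div_aux a b c h hc m, ← Finset.Ico_add_one_right_eq_Icc, Finset.sum_Ico_eq_sum_range]
  have e : m + 1 - 1 = m := by omega
  rw [e]
  refine Finset.sum_congr rfl fun i hi => ?_
  simp only [Finset.mem_range] at hi
  have e1 : 1 + i - 1 = i := by omega
  have e2 : m - (1 + i) = m - 1 - i := by omega
  rw [e1, e2]

/-- Distribution of the inter-delivery time of user 1 under a stationary
randomized policy: the case-by-case probability sum equals δ·x^(ℓ-1) + β·y^(ℓ-1). -/
theorem interdelivery_distribution
    (μ1 μ2 μ3 ε1 ε12 : ℝ)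
    (hμ1 : 0 < μ1) (hμ2 : 0 < μ2) (hμ3 : 0 < μ3) (hμ : μ1 + μ2 + μ3 = 1)
    (h12 : 0 ≤ ε12) (h121 : ε12 < ε1) (h1 : ε1 < 1)
    (x y z D δ β : ℝ)
    (hx : x = μ1 * ε12 + μ2 + μ3)
    (hy : y = μ1 * ε1 + μ2 + μ3 * ε1)
    (hz : z = μ1 * ε12 + μ2 + μ3 * ε1)
    (hD : D = μ3 * (1 - ε1) - μ1 * (ε1 - ε12))
    (hδ : δ = μ1 * (1 - ε12) + μ1^2 * (ε1 - ε12) * (1 - ε12) / D)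
    (hβ : β = -(μ1 * (ε1 - ε12) * (1 - ε1) * (μ1 + μ3)) / D)
    (hDne : D ≠ 0)
    (ℓ : ℕ) (hℓ : 1 ≤ ℓ) :
    x ^ (ℓ - 1) * (μ1 * (1 - ε1))
      + (∑ t ∈ Icc 1 (ℓ - 1), x ^ (t - 1) * y ^ (ℓ - 1 - t))
          * (μ1 * (ε1 - ε12)) * (μ1 * (1 - ε1))
      + (∑ d ∈ Icc 2 ℓ, ∑ t ∈ Icc 1 (ℓ - d),
          x ^ (t - 1) * y ^ (ℓ - d - t) * (μ1 * (ε1 - ε12))^2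
            * z ^ (d - 2) * (μ3 * (1 - ε1)))
      + (∑ d ∈ Icc 2 ℓ,
          x ^ (ℓ - d) * (μ1 * (ε1 - ε12)) * z ^ (d - 2) * (μ3 * (1 - ε1)))
      = δ * x ^ (ℓ - 1) + β * y ^ (ℓ - 1) := by
  obtain ⟨n, rfl⟩ := Nat.exists_eq_add_of_le hℓ
  -- ℓ = 1 + n
  have hBpos : (0:ℝ) < μ1 * (ε1 - ε12) := by
    apply mul_pos hμ1; linarith
  have hCpos : (0:ℝ) < μ3 * (1 - ε1) := by
    apply mul_pos hμ3; linarith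
  have hBne : μ1 * (ε1 - ε12) ≠ 0 := ne_of_gt hBpos
  have hCne : μ3 * (1 - ε1) ≠ 0 := ne_of_gt hCpos
  have hxy : x - y = D := by rw [hx, hy, hD]; ring
  have hzx : z - x = -(μ3 * (1 - ε1)) := by rw [hx, hz]; ring
  have hzy : z - y = -(μ1 * (ε1 - ε12)) := by rw [hy, hz]; ring
  have hCne' : -(μ3 * (1 - ε1)) ≠ 0 := by simpa using hCne
  have hBne' : -(μ1 * (ε1 - ε12)) ≠ 0 := by simpa using hBne
  have hIcc : ∀ m : ℕ, ∑ t ∈ Icc 1 m, x ^ (t - 1) * y ^ (m - t)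
      = (x ^ m - y ^ m) / D := icc_geom_aux x y D hxy hDne
  -- first sum
  have hs1 : (∑ t ∈ Icc 1 (1 + n - 1), x ^ (t - 1) * y ^ (1 + n - 1 - t))
      = (x ^ n - y ^ n) / D := by
    have : 1 + n - 1 = n := by omega
    rw [this]
    rw [← hIcc n]
  -- fourth sum
  have hs4 : (∑ d ∈ Icc 2 (1 + n),
        x ^ (1 + n - d) * (μ1 * (ε1 - ε12)) * z ^ (d - 2) * (μ3 * (1 - ε1)))
      = ((z ^ n - x ^ n) / (-(μ3 * (1 - ε1)))) * ((μ1 * (ε1 - ε12)) * (μ3 * (1 - ε1))) := by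
    rw [← Finset.Ico_add_one_right_eq_Icc, Finset.sum_Ico_eq_sum_range]
    rw [← geom_div_aux z x _ hzx hCne' n, Finset.sum_mul]
    apply Finset.sum_congr
    · congr 1; omega
    · intro i hi
      simp only [Finset.mem_range] at hi
      have e1 : 1 + n - (2 + i) = n - 1 - i := by omega
      have e2 : 2 + i - 2 = i := by omega
      rw [e1, e2]; ring
  -- third (double) sum
  have hs3 : (∑ d ∈ Icc 2 (1 + n), ∑ t ∈ Icc 1 (1 + n - d),
        x ^ (t - 1) * y ^ (1 + n - d - t) * (μ1 * (ε1 - ε12))^2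
          * z ^ (d - 2) * (μ3 * (1 - ε1)))
      = ((z ^ n - x ^ n) / (-(μ3 * (1 - ε1)))
          - (z ^ n - y ^ n) / (-(μ1 * (ε1 - ε12))))
        * ((μ1 * (ε1 - ε12))^2 * (μ3 * (1 - ε1)) / D) := by
    rw [← Finset.Ico_add_one_right_eq_Icc, Finset.sum_Ico_eq_sum_range]
    rw [← geom_div_aux z x _ hzx hCne' n, ← geom_div_aux z y _ hzy hBne' n]
    rw [← Finset.sum_sub_distrib, Finset.sum_mul]
    apply Finset.sum_congr
    · congr 1; omega
    · intro i hi
      simp only [Finset.mem_range] at hi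
      have e1 : 1 + n - (2 + i) = n - 1 - i := by omega
      have e2 : 2 + i - 2 = i := by omega
      rw [e1, e2]
      have : ∀ t ∈ Icc 1 (n - 1 - i),
          x ^ (t - 1) * y ^ (n - 1 - i - t) * (μ1 * (ε1 - ε12))^2
            * z ^ i * (μ3 * (1 - ε1))
          = (x ^ (t - 1) * y ^ (n - 1 - i - t))
            * ((μ1 * (ε1 - ε12))^2 * z ^ i * (μ3 * (1 - ε1))) := by
        intro t _; ring
      rw [Finset.sum_congr rfl this, ← Finset.sum_mul, hIcc (n - 1 - i)]
      field_simp
  rw [hs1, hs3, hs4]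
  have e0 : 1 + n - 1 = n := by omega
  rw [e0, hδ, hβ]
  have hxv : x = z + μ3 * (1 - ε1) := by rw [hx, hz]; ring
  have hyv : y = z + μ1 * (ε1 - ε12) := by rw [hy, hz]; ring
  rw [hD] at hDne ⊢
  have h1e : (1:ℝ) - ε1 ≠ 0 := by linarith
  have hee : ε1 - ε12 ≠ 0 := by linarith
  rw [hxv, hyv]
  field_simp
  ring
end

section
/- Let μ1, μ2, μ3 > 0 with μ1 + μ2 + μ3 = 1 and 0 ≤ ε12 < ε1 < 1, and set x = μ1·ε12 + μ2 + μ3, y = μ1·ε1 + μ2 + μ3·ε1, z = μ1·ε12 + μ2 + μ3·ε1, D = μ3·(1−ε1) − μ1·(ε1−ε12), δ = μ1·(1−ε12) + μ1²·(ε1−ε12)·(1−ε12)/D, β = −μ1·(ε1−ε12)·(1−ε1)·(μ1+μ3)/D. Assume D ≠ 0 and δ/(1−x)² + β/(1−y)² ≠ 0. Then the per-user average age E[I1²]/(2·E[I1]) + E[D1] − 1/2, with E[I1] = δ/(1−x)² + β/(1−y)², E[I1²] = δ·(1+x)/(1−x)³ + β·(1+y)/(1−y)³ and E[D1] = 1 +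 μ3·(ε1−ε12)/((μ1+μ3)·(1−ε12)·(1−z)), equals ( μ3·(1−ε1)/(μ1·(1−ε12))² − μ1·(ε1−ε12)/((μ1+μ3)·(1−ε1))² ) / ( μ3·(1−ε1)/(μ1·(1−ε12)) − μ1·(ε1−ε12)/((μ1+μ3)·(1−ε1)) ) + μ3·(ε1−ε12) / ( (μ1+μ3)·(1−ε12)·(μ1·(1−ε12) + μ3·(1−ε1)) ). (This is the per-user bracket in the closed-form expected weighted sum age of information of the stationary randomized policy.) -/
set_option maxHeartbeats 1600000 in
/-- Per-user bracket in the closed-form EWSAoI of the stationary randomized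
policy: E[I1²]/(2E[I1]) + E[D1] − 1/2 in closed form. -/
theorem per_user_average_age_closed_form
    (μ1 μ2 μ3 ε1 ε12 : ℝ)
    (hμ1 : 0 < μ1) (hμ2 : 0 < μ2) (hμ3 : 0 < μ3) (hμ : μ1 + μ2 + μ3 = 1)
    (h12 : 0 ≤ ε12) (h121 : ε12 < ε1) (h1 : ε1 < 1)
    (x y z D δ β EI EI2 ED : ℝ)
    (hx : x = μ1 * ε12 + μ2 + μ3)
    (hy : y = μ1 * ε1 + μ2 + μ3 * ε1)
    (hz : z = μ1 * ε12 + μ2 + μ3 * ε1)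
    (hD : D = μ3 * (1 - ε1) - μ1 * (ε1 - ε12))
    (hδ : δ = μ1 * (1 - ε12) + μ1^2 * (ε1 - ε12) * (1 - ε12) / D)
    (hβ : β = -(μ1 * (ε1 - ε12) * (1 - ε1) * (μ1 + μ3)) / D)
    (hDne : D ≠ 0)
    (hEI : EI = δ / (1 - x)^2 + β / (1 - y)^2)
    (hEI2 : EI2 = δ * (1 + x) / (1 - x)^3 + β * (1 + y) / (1 - y)^3)
    (hED : ED = 1 + μ3 * (ε1 - ε12) / ((μ1 + μ3) * (1 - ε12) * (1 - z)))
    (hEIne : EI ≠ 0) :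
    EI2 / (2 * EI) + ED - 1/2
      = (μ3 * (1 - ε1) / (μ1 * (1 - ε12))^2
          - μ1 * (ε1 - ε12) / ((μ1 + μ3) * (1 - ε1))^2)
        / (μ3 * (1 - ε1) / (μ1 * (1 - ε12))
          - μ1 * (ε1 - ε12) / ((μ1 + μ3) * (1 - ε1)))
        + μ3 * (ε1 - ε12)
          / ((μ1 + μ3) * (1 - ε12) * (μ1 * (1 - ε12) + μ3 * (1 - ε1))) := by
  have he : 0 < ε1 - ε12 := by linarith
  have ha : μ1 * (1 - ε12) ≠ 0 := by nlinarith
  have hb : (μ1 + μ3) * (1 - ε1) ≠ 0 := by nlinarith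
  have hxa : 1 - x = μ1 * (1 - ε12) := by rw [hx]; linarith
  have hyb : 1 - y = (μ1 + μ3) * (1 - ε1) := by rw [hy]; linarith
  have h1x : 1 + x = 2 - μ1 * (1 - ε12) := by rw [hx]; linarith
  have h1y : 1 + y = 2 - (μ1 + μ3) * (1 - ε1) := by rw [hy]; linarith
  have hzz : 1 - z = μ1 * (1 - ε12) + μ3 * (1 - ε1) := by rw [hz]; linarith
  have hδ' : δ = μ1 * (1 - ε12) * (μ3 * (1 - ε1)) / D := by
    rw [hδ]
    field_simp
    rw [hD]; ring
  have hβ' : β = -(μ1 * (ε1 - ε12)) * ((μ1 + μ3) * (1 - ε1)) / D := by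
    rw [hβ]; ring
  have hden : μ3 * (1 - ε1) / (μ1 * (1 - ε12))
      - μ1 * (ε1 - ε12) / ((μ1 + μ3) * (1 - ε1)) = D * EI := by
    rw [hEI, hδ', hβ', hxa, hyb]
    field_simp
    ring
  have hdne : μ3 * (1 - ε1) / (μ1 * (1 - ε12))
      - μ1 * (ε1 - ε12) / ((μ1 + μ3) * (1 - ε1)) ≠ 0 := by
    rw [hden]; exact mul_ne_zero hDne hEIne
  have hnum : μ3 * (1 - ε1) / (μ1 * (1 - ε12))^2
      - μ1 * (ε1 - ε12) / ((μ1 + μ3) * (1 - ε1))^2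
      = D * (EI2 + EI) / 2 := by
    rw [hEI2, hEI, hδ', hβ', hxa, hyb, h1x, h1y]
    have hn1 : (1 - ε12) ≠ 0 := (by linarith : (0:ℝ) < 1 - ε12).ne'
    have hn2 : (1 - ε1) ≠ 0 := (by linarith : (0:ℝ) < 1 - ε1).ne'
    have hn3 : μ1 ≠ 0 := hμ1.ne'
    have hn4 : μ1 + μ3 ≠ 0 := (by linarith : (0:ℝ) < μ1 + μ3).ne'
    field_simp
    ring
  rw [hED, hzz, hnum, hden]
  field_simp
  ring
end

section
/- Let 0 ≤ ε12 < ε < 1 with ε12 − 2ε + 1 ≥ 0, and let α > 0. Define, for μ ∈ (0, 1/2], f(μ) = (α/((1−ε12)·(1−μ))) · ( ( (1−ε)³·(1−2μ)·(1−μ)² − (1−ε12)²·(ε−ε12)·μ³ ) / ( ((1−2μ)·(1−ε)²·(1−μ) − μ²·(1−ε12)·(ε−ε12))·μ ) + (1−2μ)·(ε−ε12) / ( (2ε−1−ε12)·μ + 1−ε ) ), and N(μ) = (1−2μ)·(1−ε)²·(1−μ) − μ²·(1−ε12)·(ε−ε12). Then for every μ ∈ (0, 1/2) with N(μ) ≠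 0 one has f(1/2) < f(μ); i.e., the unique optimal coded randomized policy is μ* = 1/2, which never uses the coded action. -/
/-- In the symmetric case with ε12 − 2ε + 1 ≥ 0, μ* = 1/2 is the unique optimal
coded randomized policy: f(1/2) < f(μ) for all μ ∈ (0, 1/2) with N(μ) ≠ 0. -/
theorem uncoded_optimal_when_condition_holds
    (ε ε12 α : ℝ)
    (h12 : 0 ≤ ε12) (h121 : ε12 < ε) (h1 : ε < 1)
    (hcond : 0 ≤ ε12 - 2*ε + 1) (hα : 0 < α)
    (f N : ℝ → ℝ)
    (hf : ∀ μ : ℝ, f μ = (α / ((1 - ε12) * (1 - μ)))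
          * (((1 - ε)^3 * (1 - 2*μ) * (1 - μ)^2
                - (1 - ε12)^2 * (ε - ε12) * μ^3)
              / (((1 - 2*μ) * (1 - ε)^2 * (1 - μ)
                    - μ^2 * (1 - ε12) * (ε - ε12)) * μ)
            + (1 - 2*μ) * (ε - ε12) / ((2*ε - 1 - ε12) * μ + 1 - ε)))
    (hNdef : ∀ μ : ℝ, N μ = (1 - 2*μ) * (1 - ε)^2 * (1 - μ)
              - μ^2 * (1 - ε12) * (ε - ε12)) :
    ∀ μ : ℝ, 0 < μ → μ < 1/2 → N μ ≠ 0 → f (1/2) < f μ := by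
  intro μ hμ0 hμh hN
  have hb : (0:ℝ) < 1 - ε12 := by linarith
  have hd : (0:ℝ) < ε - ε12 := by linarith
  have ha : (0:ℝ) < 1 - ε := by linarith
  have hm1 : (0:ℝ) < 1 - μ := by linarith
  have h2m : (0:ℝ) < 1 - 2*μ := by linarith
  -- second denominator D2 is positive
  have hD2 : (0:ℝ) < (2*ε - 1 - ε12) * μ + 1 - ε := by nlinarith
  -- factorization N μ = K * D2
  have hfac : N μ = ((1 - ε) * (1 - 2*μ) - (ε - ε12) * μ)
      * ((2*ε - 1 - ε12) * μ + 1 - ε) := by rw [hNdef]; ring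
  have hK : (1 - ε) * (1 - 2*μ) - (ε - ε12) * μ ≠ 0 := by
    intro h
    exact hN (by rw [hfac, h, zero_mul])
  -- value at 1/2
  have hden12 : ((1 - 2*(1/2:ℝ)) * (1 - ε)^2 * (1 - 1/2)
      - (1/2:ℝ)^2 * (1 - ε12) * (ε - ε12)) * (1/2) ≠ 0 := by
    have : ((1 - 2*(1/2:ℝ)) * (1 - ε)^2 * (1 - 1/2)
        - (1/2:ℝ)^2 * (1 - ε12) * (ε - ε12)) * (1/2)
        = -((1 - ε12) * (ε - ε12)) / 8 := by ring
    rw [this]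
    have := mul_pos hb hd
    intro h
    rw [div_eq_zero_iff] at h
    rcases h with h | h
    · nlinarith
    · norm_num at h
  have hD212 : (2*ε - 1 - ε12) * (1/2:ℝ) + 1 - ε ≠ 0 := by
    have : (2*ε - 1 - ε12) * (1/2:ℝ) + 1 - ε = (1 - ε12)/2 := by ring
    rw [this]; positivity
  have hf12 : f (1/2) = 2 * α := by
    rw [hf]
    rw [div_add_div _ _ hden12 hD212, div_mul_div_comm,
      div_eq_iff (mul_ne_zero (by positivity) (mul_ne_zero hden12 hD212))]
    ring
  -- the key identity:  f μ = 2α + α·Q / positive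
  have hQ : (0:ℝ) < (1 - 2*μ) * ((1 - ε)^2 * (1 - μ)^2
      + (ε - ε12) * μ * (ε12 + (ε - ε12) * (1 - μ))) := by
    have h1' : (0:ℝ) < (1 - ε)^2 * (1 - μ)^2 := by positivity
    have h2' : (0:ℝ) ≤ (ε - ε12) * μ * (ε12 + (ε - ε12) * (1 - μ)) := by
      apply mul_nonneg (by positivity)
      nlinarith
    nlinarith
  have hdenμ : ((1 - 2*μ) * (1 - ε)^2 * (1 - μ)
      - μ^2 * (1 - ε12) * (ε - ε12)) * μ ≠ 0 := by
    apply mul_ne_zero _ (ne_of_gt hμ0)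
    intro h
    exact hN (by rw [hNdef]; exact h)
  have hD2ne : (2*ε - 1 - ε12) * μ + 1 - ε ≠ 0 := ne_of_gt hD2
  have hkey : f μ = 2 * α + α * ((1 - 2*μ) * ((1 - ε)^2 * (1 - μ)^2
      + (ε - ε12) * μ * (ε12 + (ε - ε12) * (1 - μ))))
      / ((1 - ε12) * (1 - μ) * μ * ((2*ε - 1 - ε12) * μ + 1 - ε)) := by
    have hNexpr : (1 - 2*μ) * (1 - ε)^2 * (1 - μ) - μ^2 * (1 - ε12) * (ε - ε12) ≠ 0 := by
      intro h; exact hN (by rw [hNdef]; exact h)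
    have hμne : μ ≠ 0 := ne_of_gt hμ0
    have hm1ne : (1:ℝ) - μ ≠ 0 := ne_of_gt hm1
    have hbne : (1:ℝ) - ε12 ≠ 0 := ne_of_gt hb
    rw [hf]
    rw [div_add_div _ _ hdenμ hD2ne, div_mul_div_comm,
      div_eq_iff (by exact mul_ne_zero (mul_ne_zero hbne hm1ne) (mul_ne_zero hdenμ hD2ne))]
    rw [add_mul, div_mul_eq_mul_div, mul_div_assoc,
      show (1 - ε12) * (1 - μ) * (((1 - 2*μ) * (1 - ε)^2 * (1 - μ) - μ^2 * (1 - ε12) * (ε - ε12)) * μ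
          * ((2*ε - 1 - ε12) * μ + 1 - ε)) / ((1 - ε12) * (1 - μ) * μ * ((2*ε - 1 - ε12) * μ + 1 - ε))
          = (1 - 2*μ) * (1 - ε)^2 * (1 - μ) - μ^2 * (1 - ε12) * (ε - ε12) from by
        rw [div_eq_iff (by positivity)]; ring]
    ring
  rw [hf12, hkey]
  have : (0:ℝ) < α * ((1 - 2*μ) * ((1 - ε)^2 * (1 - μ)^2
      + (ε - ε12) * μ * (ε12 + (ε - ε12) * (1 - μ))))
      / ((1 - ε12) * (1 - μ) * μ * ((2*ε - 1 - ε12) * μ + 1 - ε)) := by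
    apply div_pos (mul_pos hα hQ) (by positivity)
  linarith
end
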